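/- Let c > 0, \alpha > 2, R > 0, and let b \ge 1 be an integer; set \delta = 2/\alpha. Then 2 \int_R^\infty [ 1 - (1 + c R^\alpha r^{-\alpha})^{-b} ] \, r \, dr = R^2 \delta \sum_{k=1}^{b} \binom{b}{k} (-1)^{k+1} c^k \int_0^1 u^{k-\delta-1} (1 + c u)^{-k} \, du. -/

import Mathlib

open MeasureTheory Real

private lemma range_succ_eq_insert_Icc (b : ℕ) :
    Finset.range (b + 1) = insert 0 (Finset.Icc 1 b) := by
  ext x; simp [Finset.mem_range, Finset.mem_Icc]; omega

private lemma key_identity (c δ : ℝ) (b : ℕ) (u : ℝ) (hu : 0 < u) (hc : 0 < c) :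
    u ^ (-δ - 1) * (1 - ((1 + c * u) ^ b)⁻¹) =
      ∑ k ∈ Finset.Icc 1 b, (b.choose k : ℝ) * (-1 : ℝ) ^ (k + 1) * c ^ k *
        (u ^ ((k : ℝ) - δ - 1) * ((1 + c * u) ^ k)⁻¹) := by
  set t : ℝ := 1 + c * u with ht
  have ht0 : 0 < t := by positivity
  have h1 : ∀ k ∈ Finset.Icc 1 b,
      (b.choose k : ℝ) * (-1 : ℝ) ^ (k + 1) * c ^ k *
        (u ^ ((k : ℝ) - δ - 1) * (t ^ k)⁻¹) =
      u ^ (-δ - 1) * (-((-(c * u) / t) ^ k * (b.choose k : ℝ))) := by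
    intro k hk
    have h2 : u ^ ((k : ℝ) - δ - 1) = u ^ (k : ℕ) * u ^ (-δ - 1) := by
      rw [← Real.rpow_natCast u k, ← Real.rpow_add hu]; ring_nf
    have h3 : (-(c * u) / t) ^ k = (-1 : ℝ) ^ k * (c ^ k * u ^ k) * (t ^ k)⁻¹ := by
      rw [div_pow, neg_pow, mul_pow]; ring
    have h4 : (-1 : ℝ) ^ (k + 1) = -(-1 : ℝ) ^ k := by rw [pow_succ]; ring
    rw [h2, h3, h4]; ring
  rw [Finset.sum_congr rfl h1, ← Finset.mul_sum, Finset.sum_neg_distrib]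
  congr 1
  have expand := add_pow (-(c * u) / t) 1 b
  have hx1 : -(c * u) / t + 1 = 1 / t := by
    field_simp
    rw [ht]; ring
  rw [hx1] at expand
  have hsplit : ∑ k ∈ Finset.range (b + 1), (-(c * u) / t) ^ k * 1 ^ (b - k) * (b.choose k : ℝ) =
      1 + ∑ k ∈ Finset.Icc 1 b, (-(c * u) / t) ^ k * (b.choose k : ℝ) := by
    rw [range_succ_eq_insert_Icc, Finset.sum_insert (by simp)]
    simp [Finset.sum_congr]
  rw [hsplit] at expand
  have : ∑ k ∈ Finset.Icc 1 b, (-(c * u) / t) ^ k * (b.choose k : ℝ) = (1 / t) ^ b - 1 := by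
    linarith [expand]
  rw [this]
  rw [one_div, inv_pow]
  ring

/-- For `c > 0`, `α > 2`, `R > 0`, integer `b ≥ 1` and `δ = 2/α`:
`2 ∫_R^∞ [1 - (1 + c R^α r^(-α))^(-b)] r dr
  = R² δ ∑_{k=1}^b C(b,k) (-1)^(k+1) c^k ∫₀¹ u^(k-δ-1) (1 + c u)^(-k) du`. -/
theorem positive_moment_integral_eval
    (c α R : ℝ) (b : ℕ) (hc : 0 < c) (hα : 2 < α) (hR : 0 < R) (hb : 1 ≤ b) :
    2 * (∫ r in Set.Ioi R, (1 - ((1 + c * R ^ α * r ^ (-α)) ^ b)⁻¹) * r) =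
      R ^ 2 * (2 / α) * ∑ k ∈ Finset.Icc 1 b,
        (b.choose k : ℝ) * (-1 : ℝ) ^ (k + 1) * c ^ k *
          ∫ u in Set.Ioo (0 : ℝ) 1, u ^ ((k : ℝ) - 2 / α - 1) * ((1 + c * u) ^ k)⁻¹ := by
  have hα0 : (0 : ℝ) < α := by linarith
  have hαne : α ≠ 0 := ne_of_gt hα0
  set e : ℝ := -(1 / α) with he
  have he_ne : e ≠ 0 := by
    simp [he, hαne]
  have he_neg : e < 0 := by
    rw [he]; simp [hα0]
  set f : ℝ → ℝ := fun u => R * u ^ e with hf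
  set f' : ℝ → ℝ := fun u => R * (e * u ^ (e - 1)) with hf'
  set g : ℝ → ℝ := fun r => (1 - ((1 + c * R ^ α * r ^ (-α)) ^ b)⁻¹) * r with hg
  -- image
  have himage : f '' Set.Ioo 0 1 = Set.Ioi R := by
    ext r
    constructor
    · rintro ⟨u, ⟨hu0, hu1⟩, rfl⟩
      have : 1 < u ^ e := by
        rw [Real.one_lt_rpow_iff_of_pos hu0]
        right; exact ⟨hu1, he_neg⟩
      simpa [hf, Set.mem_Ioi] using (by nlinarith : R < R * u ^ e)
    · intro hr
      have hr' : R < r := hr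
      have hr0 : 0 < r := hR.trans hr'
      refine ⟨(R / r) ^ α, ⟨?_, ?_⟩, ?_⟩
      · exact Real.rpow_pos_of_pos (div_pos hR hr0) α
      · exact Real.rpow_lt_one (div_nonneg hR.le hr0.le)
          ((div_lt_one hr0).mpr hr') hα0
      · show R * ((R / r) ^ α) ^ e = r
        rw [← Real.rpow_mul (div_nonneg hR.le hr0.le)]
        have : α * e = -1 := by rw [he]; field_simp
        rw [this, Real.rpow_neg_one, inv_div]
        field_simp
  -- injectivity
  have hinj : Set.InjOn f (Set.Ioo 0 1) := by
    intro u hu v hv huv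
    have h1 : u ^ e = v ^ e := by
      have := huv
      simp only [hf] at this
      exact mul_left_cancel₀ (ne_of_gt hR) this
    exact Real.rpow_left_injOn he_ne hu.1.le hv.1.le h1
  -- derivative
  have hderiv : ∀ u ∈ Set.Ioo (0 : ℝ) 1, HasDerivWithinAt f (f' u) (Set.Ioo 0 1) u := by
    intro u hu
    exact ((Real.hasDerivAt_rpow_const (Or.inl (ne_of_gt hu.1))).const_mul R).hasDerivWithinAt
  have hchange : (∫ r in Set.Ioi R, g r) = ∫ u in Set.Ioo (0:ℝ) 1, |f' u| • g (f u) := by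
    rw [← himage]
    exact integral_image_eq_integral_abs_deriv_smul measurableSet_Ioo hderiv hinj g
  -- pointwise rewriting of the transformed integrand
  have hpt : ∀ u ∈ Set.Ioo (0 : ℝ) 1, |f' u| • g (f u) =
      ∑ k ∈ Finset.Icc 1 b,
        ((R ^ 2 / α) * ((b.choose k : ℝ) * (-1 : ℝ) ^ (k + 1) * c ^ k)) *
          (u ^ ((k : ℝ) - 2 / α - 1) * ((1 + c * u) ^ k)⁻¹) := by
    intro u ⟨hu0, hu1⟩
    have hue : (0:ℝ) < u ^ e := Real.rpow_pos_of_pos hu0 e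
    have hfu : (1 : ℝ) + c * R ^ α * (f u) ^ (-α) = 1 + c * u := by
      have h1 : (f u) ^ (-α) = R ^ (-α) * u := by
        show (R * u ^ e) ^ (-α) = _
        rw [Real.mul_rpow hR.le hue.le, ← Real.rpow_mul hu0.le]
        have : e * -α = 1 := by rw [he]; field_simp
        rw [this, Real.rpow_one]
      rw [h1, ← mul_assoc, mul_assoc (c) (R ^ α) (R ^ (-α)), ← Real.rpow_add hR]
      simp
    have habs : |f' u| = R * (1 / α) * u ^ (e - 1) := by
      have hue1 : (0:ℝ) < u ^ (e - 1) := Real.rpow_pos_of_pos hu0 _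
      rw [hf', abs_mul, abs_mul, abs_of_pos hR, abs_of_pos hue1, abs_of_neg he_neg]
      rw [he]; ring
    have hkey := key_identity c (2 / α) b u hu0 hc
    have hsmul : |f' u| • g (f u) =
        (R ^ 2 / α) * (u ^ (-(2/α) - 1) * (1 - ((1 + c * u) ^ b)⁻¹)) := by
      rw [habs]
      show R * (1 / α) * u ^ (e - 1) * ((1 - ((1 + c * R ^ α * (f u) ^ (-α)) ^ b)⁻¹) * (R * u ^ e)) = _
      rw [hfu]
      have hupow : u ^ (e - 1) * u ^ e = u ^ (-(2/α) - 1) := by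
        rw [← Real.rpow_add hu0]
        congr 1
        rw [he]; ring
      calc R * (1 / α) * u ^ (e - 1) * ((1 - ((1 + c * u) ^ b)⁻¹) * (R * u ^ e))
          = (R ^ 2 / α) * ((u ^ (e - 1) * u ^ e) * (1 - ((1 + c * u) ^ b)⁻¹)) := by ring
        _ = _ := by rw [hupow]
    rw [hsmul]
    have : u ^ (-(2/α) - 1) = u ^ (-(2/α) - 1) := rfl
    rw [show (-(2/α) - 1 : ℝ) = -(2/α) - 1 from rfl] at hkey ⊢
    rw [hkey, Finset.mul_sum]
    exact Finset.sum_congr rfl (fun k _ => by ring)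
  have hcong : (∫ u in Set.Ioo (0:ℝ) 1, |f' u| • g (f u)) =
      ∫ u in Set.Ioo (0:ℝ) 1, ∑ k ∈ Finset.Icc 1 b,
        ((R ^ 2 / α) * ((b.choose k : ℝ) * (-1 : ℝ) ^ (k + 1) * c ^ k)) *
          (u ^ ((k : ℝ) - 2 / α - 1) * ((1 + c * u) ^ k)⁻¹) :=
    setIntegral_congr_fun measurableSet_Ioo hpt
  -- integrability of each term
  have hint : ∀ k ∈ Finset.Icc 1 b, IntegrableOn
      (fun u : ℝ => ((R ^ 2 / α) * ((b.choose k : ℝ) * (-1 : ℝ) ^ (k + 1) * c ^ k)) *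
          (u ^ ((k : ℝ) - 2 / α - 1) * ((1 + c * u) ^ k)⁻¹)) (Set.Ioo 0 1) := by
    intro k hk
    have hk1 : 1 ≤ k := (Finset.mem_Icc.mp hk).1
    have hexp : (-1 : ℝ) < (k : ℝ) - 2 / α - 1 := by
      have h2α : 2 / α < 1 := by
        rw [div_lt_one hα0]; linarith
      have : (1 : ℝ) ≤ (k : ℝ) := by exact_mod_cast hk1
      linarith
    have hbase : IntegrableOn (fun u : ℝ => u ^ ((k : ℝ) - 2 / α - 1)) (Set.Ioo 0 1) :=
      (intervalIntegral.integrableOn_Ioo_rpow_iff one_pos).mpr hexp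
    have hmeas : AEStronglyMeasurable (fun u : ℝ => ((1 + c * u) ^ k)⁻¹)
        (volume.restrict (Set.Ioo (0:ℝ) 1)) := by
      apply Measurable.aestronglyMeasurable
      exact (((measurable_const.add (measurable_id.const_mul c)).pow_const k).inv)
    have hbound : ∀ᵐ u ∂(volume.restrict (Set.Ioo (0:ℝ) 1)),
        ‖((1 + c * u) ^ k)⁻¹‖ ≤ 1 := by
      filter_upwards [ae_restrict_mem measurableSet_Ioo] with u hu
      have h1 : (1 : ℝ) ≤ (1 + c * u) ^ k :=
        one_le_pow₀ (by nlinarith [hu.1] : (1:ℝ) ≤ 1 + c * u)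
      rw [Real.norm_eq_abs, abs_of_pos (by positivity)]
      exact inv_le_one_of_one_le₀ h1
    have hprod : IntegrableOn
        (fun u : ℝ => ((1 + c * u) ^ k)⁻¹ * u ^ ((k : ℝ) - 2 / α - 1)) (Set.Ioo 0 1) :=
      Integrable.bdd_mul hbase hmeas hbound
    exact ((hprod.congr_fun (fun u _ => by ring) measurableSet_Ioo)).const_mul _
  rw [hg] at hchange
  rw [hchange, hcong, integral_finset_sum _ hint, Finset.mul_sum, Finset.mul_sum]
  refine Finset.sum_congr rfl fun k hk => ?_
  rw [MeasureTheory.integral_const_mul]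
  field_simp
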